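/- Let a₁, a₂, b₁, b₂ ∈ ℂ with a₂ ≠ 0, b₂ = -1/(4a₂) and b₁ = -a₁/(2a₂). Set a(x) = a₁x + a₂x², b(x) = b₁x + b₂x². Define operators on ℂ[x]: A = multiplication by x, B₁(f) = f' + a'f on the source, and X = (f ↦ f' + b'f), Y = multiplication by x on the target. Then the ℂ-linear map T : ℂ[x] → ℂ[x], T(f) = f(X)(1) (i.e. substitute the operator ∂ + b'(x) for x in f and apply to the constant 1), satisfies T∘A = X∘T and T∘B₁ = -Y∘T, and T is bijective. -/

import Mathlib

open Polynomial

/-- The twisted derivative operator `f ↦ f' + p·f` on `ℂ[x]`, as a `ℂ`-linear map. -/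
noncomputable def twD (p : Polynomial ℂ) : Module.End ℂ (Polynomial ℂ) :=
  (derivative : Polynomial ℂ →ₗ[ℂ] Polynomial ℂ) + LinearMap.mulLeft ℂ p

lemma twD_apply (p g : Polynomial ℂ) : twD p g = derivative g + p * g := rfl

noncomputable def Yop : Module.End ℂ (Polynomial ℂ) := LinearMap.mulLeft ℂ (X : Polynomial ℂ)

lemma twD_comm (p : Polynomial ℂ) : twD p * Yop = Yop * twD p + 1 := by
  apply LinearMap.ext; intro g
  simp only [Yop, Module.End.mul_apply, LinearMap.add_apply, twD_apply, LinearMap.mulLeft_apply,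
    Module.End.one_apply, derivative_mul, derivative_X, one_mul]
  ring

lemma twD_pow_comm (p : Polynomial ℂ) (n : ℕ) :
    twD p ^ (n + 1) * Yop = Yop * twD p ^ (n + 1) + ((n : ℂ) + 1) • twD p ^ n := by
  induction n with
  | zero => simpa using twD_comm p
  | succ n ih =>
      have h1 : twD p ^ (n + 2) * Yop = twD p * (twD p ^ (n + 1) * Yop) := by
        rw [← mul_assoc, ← pow_succ']
      rw [h1, ih, mul_add, ← mul_assoc, twD_comm, mul_smul_comm, add_mul, one_mul, mul_assoc,
        ← pow_succ']
      push_cast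
      rw [← pow_succ', add_smul, one_smul]
      module

lemma aeval_twD_derivative (p f : Polynomial ℂ) :
    aeval (twD p) (derivative f) = aeval (twD p) f * Yop - Yop * aeval (twD p) f := by
  induction f using Polynomial.induction_on' with
  | add f g hf hg =>
      simp only [map_add, hf, hg]
      noncomm_ring
  | monomial n c =>
      rcases n with _ | n
      · simp [derivative_monomial, aeval_monomial, Algebra.commutes]
      · have h := twD_pow_comm p n
        rw [derivative_monomial]
        simp only [Nat.add_sub_cancel, aeval_monomial, Nat.cast_add, Nat.cast_one,
          Algebra.algebraMap_eq_smul_one, smul_mul_assoc, one_mul, mul_smul_comm]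
        rw [h]
        rw [smul_add, smul_smul]
        module

lemma twD_natDegree_le (c d : ℂ) (g : Polynomial ℂ) (n : ℕ) (hg : g.natDegree ≤ n) :
    (twD (C c + C d * X) g).natDegree ≤ n + 1 := by
  rw [twD_apply]
  refine le_trans (natDegree_add_le _ _) (max_le ?_ ?_)
  · exact le_trans (natDegree_derivative_le g) (by omega)
  · refine le_trans (natDegree_mul_le) ?_
    have h1 : (C c + C d * X).natDegree ≤ 1 := by compute_degree
    omega

lemma twD_coeff (c d : ℂ) (g : Polynomial ℂ) (n : ℕ) (hg : g.natDegree ≤ n) :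
    (twD (C c + C d * X) g).coeff (n + 1) = d * g.coeff n := by
  rw [twD_apply]
  have h1 : (derivative g).coeff (n + 1) = 0 := by
    apply coeff_eq_zero_of_natDegree_lt
    exact lt_of_le_of_lt (natDegree_derivative_le g) (by omega)
  have h2 : g.coeff (n + 1) = 0 := coeff_eq_zero_of_natDegree_lt (by omega)
  rw [coeff_add, h1, add_mul, coeff_add, coeff_C_mul, h2, mul_assoc, coeff_C_mul, coeff_X_mul]
  ring

lemma twD_pow_one (c d : ℂ) (k : ℕ) :
    ((twD (C c + C d * X) ^ k) (1 : Polynomial ℂ)).natDegree ≤ k ∧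
    ((twD (C c + C d * X) ^ k) (1 : Polynomial ℂ)).coeff k = d ^ k := by
  induction k with
  | zero => simp
  | succ k ih =>
      have h1 : (twD (C c + C d * X) ^ (k + 1)) (1 : Polynomial ℂ)
          = twD (C c + C d * X) ((twD (C c + C d * X) ^ k) 1) := by
        rw [pow_succ', Module.End.mul_apply]
      rw [h1]
      exact ⟨twD_natDegree_le c d _ k ih.1,
        by rw [twD_coeff c d _ k ih.1, ih.2, pow_succ']⟩

lemma aeval_twD_one_eq_sum (c d : ℂ) (f : Polynomial ℂ) (N : ℕ) (hf : f.natDegree < N) :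
    (aeval (twD (C c + C d * X)) f) (1 : Polynomial ℂ)
      = ∑ i ∈ Finset.range N, f.coeff i • ((twD (C c + C d * X) ^ i) 1) := by
  rw [aeval_eq_sum_range' hf]
  simp [LinearMap.sum_apply, LinearMap.smul_apply]

lemma aeval_twD_one_natDegree_le (c d : ℂ) (f : Polynomial ℂ) :
    ((aeval (twD (C c + C d * X)) f) (1 : Polynomial ℂ)).natDegree ≤ f.natDegree := by
  rw [aeval_twD_one_eq_sum c d f (f.natDegree + 1) (by omega)]
  refine natDegree_sum_le_of_forall_le _ _ ?_
  intro i hi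
  refine le_trans (natDegree_smul_le _ _) ?_
  exact le_trans (twD_pow_one c d i).1 (by simp at hi; omega)

lemma aeval_twD_one_coeff (c d : ℂ) (f : Polynomial ℂ) :
    ((aeval (twD (C c + C d * X)) f) (1 : Polynomial ℂ)).coeff f.natDegree
      = d ^ f.natDegree * f.coeff f.natDegree := by
  rw [aeval_twD_one_eq_sum c d f (f.natDegree + 1) (by omega), finset_sum_coeff]
  rw [Finset.sum_eq_single f.natDegree]
  · rw [coeff_smul, (twD_pow_one c d f.natDegree).2, smul_eq_mul]; ring
  · intro i hi hne
    simp only [Finset.mem_range] at hi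
    have : i < f.natDegree := by omega
    rw [coeff_smul, coeff_eq_zero_of_natDegree_lt (lt_of_le_of_lt (twD_pow_one c d i).1 this),
      smul_zero]
  · intro h; simp at h

lemma twD_aeval_surj_aux (c d : ℂ) (hd : d ≠ 0) : ∀ N, ∀ q : Polynomial ℂ, q.natDegree < N →
    ∃ f : Polynomial ℂ, (aeval (twD (C c + C d * X)) f) (1 : Polynomial ℂ) = q := by
  intro N
  induction N with
  | zero => intro q hq; omega
  | succ N ih =>
      intro q hq
      by_cases h0 : q = 0
      · refine ⟨0, ?_⟩
        rw [h0, map_zero]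
        rfl
      set n := q.natDegree with hn
      have hdn : d ^ n ≠ 0 := pow_ne_zero _ hd
      have hcq : q.coeff n ≠ 0 := by
        rw [hn, ← leadingCoeff]; exact leadingCoeff_ne_zero.mpr h0
      set e := q.coeff n / d ^ n with he
      have hne : e ≠ 0 := div_ne_zero hcq hdn
      have hmn : (C e * X ^ n).natDegree = n := natDegree_C_mul_X_pow n e hne
      set r := (aeval (twD (C c + C d * X)) (C e * X ^ n)) (1 : Polynomial ℂ) with hr
      have hrdeg : r.natDegree ≤ n := by
        rw [hr]; exact le_trans (aeval_twD_one_natDegree_le c d _) (le_of_eq hmn)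
      have hrc : r.coeff n = q.coeff n := by
        have := aeval_twD_one_coeff c d (C e * X ^ n)
        rw [hmn] at this
        rw [hr, this, coeff_C_mul, coeff_X_pow, if_pos rfl, mul_one, he]
        field_simp
      set q' := q - r with hq'
      have hq'c : q'.coeff n = 0 := by simp [hq', hrc]
      have hq'deg : q'.natDegree ≤ n := le_trans (natDegree_sub_le _ _) (max_le le_rfl hrdeg)
      by_cases h0' : q' = 0
      · refine ⟨C e * X ^ n, ?_⟩
        rw [← hr]
        have : q - r = 0 := h0'
        linear_combination (norm := ring_nf) -this
      · have hlt : q'.natDegree < n := by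
          rcases lt_or_eq_of_le hq'deg with h | h
          · exact h
          · exfalso; apply h0'
            rw [← leadingCoeff_eq_zero, leadingCoeff, h, hq'c]
        obtain ⟨f', hf'⟩ := ih q' (by omega)
        refine ⟨f' + C e * X ^ n, ?_⟩
        rw [map_add, LinearMap.add_apply, hf', ← hr, hq']
        ring

lemma twD_aeval_bijective (c d : ℂ) (hd : d ≠ 0) :
    Function.Bijective (fun f : Polynomial ℂ =>
      (aeval (twD (C c + C d * X)) f) (1 : Polynomial ℂ)) := by
  constructor
  · intro f g hfg
    by_contra hne
    have hsub : f - g ≠ 0 := sub_ne_zero.mpr hne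
    have h0 : (aeval (twD (C c + C d * X)) (f - g)) (1 : Polynomial ℂ) = 0 := by
      rw [map_sub, LinearMap.sub_apply]; exact sub_eq_zero.mpr hfg
    have := aeval_twD_one_coeff c d (f - g)
    rw [h0, coeff_zero] at this
    have hlc : (f - g).coeff (f - g).natDegree ≠ 0 := by
      rw [← leadingCoeff]; exact leadingCoeff_ne_zero.mpr hsub
    exact (mul_ne_zero (pow_ne_zero _ hd) hlc) this.symm
  · intro q
    exact twD_aeval_surj_aux c d hd (q.natDegree + 1) q (by omega)

/-- Let `a₂ ≠ 0`, `b₂ = -1/(4a₂)`, `b₁ = -a₁/(2a₂)`, `a(x) = a₁x + a₂x²`,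
`b(x) = b₁x + b₂x²`. The map `T : ℂ[x] → ℂ[x]`, `T(f) = f(∂ + b'(x))(1)`, intertwines
multiplication by `x` with `X = ∂ + b'` and the twisted derivative `B₁ = ∂ + a'` with
`-x`, and is bijective (realizing `E₊(a) ≅ E₋(b)`). -/
theorem fourier_dual_isomorphism (a₁ a₂ b₁ b₂ : ℂ) (ha : a₂ ≠ 0)
    (hb₂ : b₂ = -1 / (4 * a₂)) (hb₁ : b₁ = -a₁ / (2 * a₂)) :
    let a : Polynomial ℂ := Polynomial.C a₁ * X + Polynomial.C a₂ * X ^ 2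
    let b : Polynomial ℂ := Polynomial.C b₁ * X + Polynomial.C b₂ * X ^ 2
    let Xop : Module.End ℂ (Polynomial ℂ) := twD (derivative b)
    let T : Polynomial ℂ → Polynomial ℂ :=
      fun f => (Polynomial.aeval Xop f) (1 : Polynomial ℂ)
    (∀ f : Polynomial ℂ, T ((X : Polynomial ℂ) * f) = Xop (T f)) ∧
    (∀ f : Polynomial ℂ,
        T (derivative f + derivative a * f) = -((X : Polynomial ℂ) * T f)) ∧
    Function.Bijective T := by
  intro a b Xop T
  have hb' : derivative b = C b₁ + C (2 * b₂) * X := by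
    simp only [b, derivative_add, derivative_mul, derivative_C, derivative_X, derivative_X_pow,
      Nat.cast_ofNat, C_mul]
    ring
  have ha' : derivative a = C a₁ + C (2 * a₂) * X := by
    simp only [a, derivative_add, derivative_mul, derivative_C, derivative_X, derivative_X_pow,
      Nat.cast_ofNat, C_mul]
    ring
  have hb2 : (2 : ℂ) * b₂ ≠ 0 := by
    rw [hb₂]
    field_simp
    simp [ha]
  refine ⟨?_, ?_, ?_⟩
  · intro f
    show (aeval Xop (X * f)) 1 = Xop ((aeval Xop f) 1)
    rw [map_mul, aeval_X, Module.End.mul_apply]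
  · intro f
    show (aeval (twD (derivative b)) (derivative f + derivative a * f)) 1
      = -((X : Polynomial ℂ) * (aeval (twD (derivative b)) f) 1)
    have hD := aeval_twD_derivative (derivative b) f
    rw [map_add, LinearMap.add_apply, hD,
      show derivative a * f = f * derivative a from mul_comm _ _, map_mul]
    simp only [LinearMap.sub_apply, Module.End.mul_apply]
    have hY1 : Yop (1 : Polynomial ℂ) = X := by simp [Yop]
    have hYT : Yop ((aeval (twD (derivative b)) f) 1)
        = X * (aeval (twD (derivative b)) f) 1 := by simp [Yop]
    have ha'1 : (aeval (twD (derivative b)) (derivative a)) (1 : Polynomial ℂ)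
        = C a₁ + (2 * a₂) • derivative b := by
      rw [ha', map_add, map_mul, aeval_C, aeval_X]
      simp only [LinearMap.add_apply, Module.End.mul_apply, Module.algebraMap_end_apply]
      rw [twD_apply]
      simp only [derivative_one, mul_one, zero_add]
      rw [smul_eq_C_mul, mul_one, aeval_C, Module.algebraMap_end_apply]
    rw [hY1, hYT, ha'1]
    have harg : (X : Polynomial ℂ) + (C a₁ + (2 * a₂) • derivative b) = 0 := by
      rw [hb', smul_eq_C_mul]
      have e1 : a₁ + 2 * a₂ * b₁ = 0 := by rw [hb₁]; field_simp; ring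
      have e2 : (1 : ℂ) + 2 * a₂ * (2 * b₂) = 0 := by rw [hb₂]; field_simp; ring
      calc (X : Polynomial ℂ) + (C a₁ + C (2 * a₂) * (C b₁ + C (2 * b₂) * X))
          = C (a₁ + 2 * a₂ * b₁) + C (1 + 2 * a₂ * (2 * b₂)) * X := by
            simp only [C_add, C_mul, C_1]; ring
        _ = 0 := by rw [e1, e2]; simp
    have hzero : (aeval (twD (derivative b)) f) X
        + (aeval (twD (derivative b)) f) (C a₁ + (2 * a₂) • derivative b) = 0 := by
      rw [← map_add, harg, map_zero]
    linear_combination hzero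
  · have hT : T = fun f : Polynomial ℂ =>
        (aeval (twD (C b₁ + C (2 * b₂) * X)) f) (1 : Polynomial ℂ) := by
      funext f
      show (aeval (twD (derivative b)) f) 1 = _
      rw [hb']
    rw [hT]
    exact twD_aeval_bijective b₁ (2 * b₂) hb2
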